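/- Let ω > 0, p > 1, and a > 0. Then the function φ(x) = ((p+1)ω/2)^{1/(p−1)} (sinh((p−1)√ω x/2 + a))^{−2/(p−1)} is a solution on (0, ∞) of the ODE φ'' = ω φ + φ^p, and φ together with φ' belongs to L²(0, ∞). -/

import Mathlib

open MeasureTheory Set Real

private lemma sq_int_of_exp_bound {f : ℝ → ℝ} {M c : ℝ} (hc : 0 < c)
    (hcont : ContinuousOn f (Ioi 0))
    (hbd : ∀ x ∈ Ioi (0:ℝ), |f x| ≤ M * Real.exp (-c * x)) :
    IntegrableOn (fun x => f x ^ 2) (Ioi 0) volume := by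
  have hint : Integrable (fun x => M ^ 2 * Real.exp (-(2 * c) * x))
      (volume.restrict (Ioi (0:ℝ))) :=
    (exp_neg_integrableOn_Ioi 0 (by positivity)).const_mul _
  refine hint.mono' (((hcont.pow 2)).aestronglyMeasurable measurableSet_Ioi) ?_
  filter_upwards [ae_restrict_mem measurableSet_Ioi] with x hx
  have h1 := hbd x hx
  have h2 : |f x| ^ 2 ≤ (M * Real.exp (-c * x)) ^ 2 :=
    pow_le_pow_left₀ (abs_nonneg _) h1 2
  have h3 : Real.exp (-c * x) ^ 2 = Real.exp (-(2 * c) * x) := by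
    rw [sq, ← Real.exp_add]; congr 1; ring
  calc ‖f x ^ 2‖ = |f x| ^ 2 := by rw [Real.norm_eq_abs, abs_pow]
    _ ≤ (M * Real.exp (-c * x)) ^ 2 := h2
    _ = M ^ 2 * Real.exp (-(2 * c) * x) := by rw [mul_pow, h3]

set_option maxHeartbeats 1000000 in
/-- For `ω > 0`, `p > 1`, `a > 0`, the explicit profile
`φ(x) = ((p+1)ω/2)^{1/(p-1)} (sinh((p-1)√ω x/2 + a))^{-2/(p-1)}`
solves `φ'' = ωφ + φ^p` on `(0,∞)` and `φ, φ' ∈ L²(0,∞)`. -/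
theorem stmt_2 (ω p a : ℝ) (hω : 0 < ω) (hp : 1 < p) (ha : 0 < a) :
    let φ : ℝ → ℝ := fun x =>
      (((p + 1) * ω / 2) ^ ((1:ℝ) / (p - 1))) *
        (Real.sinh ((p - 1) * Real.sqrt ω * x / 2 + a)) ^ (-(2 / (p - 1)))
    (∀ x ∈ Ioi (0 : ℝ), deriv (deriv φ) x = ω * φ x + (φ x) ^ p) ∧
      IntegrableOn (fun x => (φ x) ^ 2) (Ioi 0) volume ∧
      IntegrableOn (fun x => (deriv φ x) ^ 2) (Ioi 0) volume := by
  intro φ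
  have hp1 : (0:ℝ) < p - 1 := by linarith
  have hp1' : (p:ℝ) - 1 ≠ 0 := hp1.ne'
  have hsq : 0 < Real.sqrt ω := Real.sqrt_pos.mpr hω
  set k : ℝ := (p - 1) * Real.sqrt ω / 2 with hkdef
  set β : ℝ := 2 / (p - 1) with hβdef
  set C : ℝ := ((p + 1) * ω / 2) ^ ((1:ℝ) / (p - 1)) with hCdef
  set u : ℝ → ℝ := fun x => (p - 1) * Real.sqrt ω * x / 2 + a with hudef
  have hkpos : 0 < k := by positivity
  have hβpos : 0 < β := by positivity
  have hW : (0:ℝ) < (p + 1) * ω / 2 := by nlinarith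
  have hCpos : 0 < C := Real.rpow_pos_of_pos hW _
  have hβk : β * k = Real.sqrt ω := by
    rw [hβdef, hkdef]; field_simp
  have hux : ∀ x, u x = k * x + a := by
    intro x; simp only [hudef]; rw [hkdef]; ring
  have hφx : ∀ x, φ x = C * Real.sinh (u x) ^ (-β) := fun _ => rfl
  have hupos : ∀ x, 0 < x → 0 < u x := by
    intro x hx
    have h := mul_pos (mul_pos hp1 hsq) hx
    simp only [hudef]; linarith
  have hdu : ∀ x : ℝ, HasDerivAt u k x := by
    intro x
    have h : HasDerivAt (fun x : ℝ => (p - 1) * Real.sqrt ω * x / 2 + a)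
        ((p - 1) * Real.sqrt ω * 1 / 2) x :=
      (((hasDerivAt_id x).const_mul ((p - 1) * Real.sqrt ω)).div_const 2).add_const a
    exact h.congr_deriv (by rw [hkdef]; ring)
  set ψ : ℝ → ℝ := fun x =>
    C * (-β) * k * (Real.sinh (u x) ^ (-β - 1) * Real.cosh (u x)) with hψdef
  have hφ' : ∀ x, 0 < u x → HasDerivAt φ (ψ x) x := by
    intro x hx
    have hs : 0 < Real.sinh (u x) := Real.sinh_pos_iff.mpr hx
    have h := (((hdu x).sinh).rpow_const (p := -β) (Or.inl hs.ne')).const_mul C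
    exact h.congr_deriv (by simp only [hψdef]; ring)
  have hψ' : ∀ x, 0 < u x → HasDerivAt ψ
      (C * (-β) * k *
        (Real.cosh (u x) * k * (-β - 1) * Real.sinh (u x) ^ (-β - 1 - 1) * Real.cosh (u x) +
          Real.sinh (u x) ^ (-β - 1) * (Real.sinh (u x) * k))) x := by
    intro x hx
    have hs : 0 < Real.sinh (u x) := Real.sinh_pos_iff.mpr hx
    have h1 := ((hdu x).sinh).rpow_const (p := -β - 1) (Or.inl hs.ne')
    exact (h1.mul (hdu x).cosh).const_mul (C * (-β) * k)
  -- the ODE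
  have hODE : ∀ x ∈ Ioi (0:ℝ), deriv (deriv φ) x = ω * φ x + (φ x) ^ p := by
    intro x hx
    have hxpos : (0:ℝ) < x := hx
    have huxp := hupos x hxpos
    have hs : 0 < Real.sinh (u x) := Real.sinh_pos_iff.mpr huxp
    have hev : deriv φ =ᶠ[nhds x] ψ := by
      filter_upwards [Ioi_mem_nhds hxpos] with y hy
      exact (hφ' y (hupos y hy)).deriv
    rw [hev.deriv_eq, (hψ' x huxp).deriv, hφx x]
    rw [show (-β - 1 - 1 : ℝ) = -β - 2 by ring]
    set s := Real.sinh (u x) with hsdef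
    set ch := Real.cosh (u x) with hchdef
    have e1 : s ^ (-β - 1) * s = s ^ (-β) := by
      rw [← Real.rpow_add_one hs.ne', show (-β - 1 + 1 : ℝ) = -β by ring]
    have e2 : s ^ (-β - 2) * s ^ 2 = s ^ (-β) := by
      rw [pow_two, ← mul_assoc, ← Real.rpow_add_one hs.ne', ← Real.rpow_add_one hs.ne',
        show (-β - 2 + 1 + 1 : ℝ) = -β by ring]
    have e3 : (C * s ^ (-β)) ^ p = C * ((p + 1) * ω / 2) * s ^ (-β - 2) := by
      rw [Real.mul_rpow hCpos.le (Real.rpow_nonneg hs.le _)]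
      have hCp : C ^ p = C * ((p + 1) * ω / 2) := by
        rw [hCdef, ← Real.rpow_mul hW.le,
          show ((1:ℝ) / (p - 1) * p) = 1 / (p - 1) + 1 by field_simp; ring,
          Real.rpow_add_one hW.ne', ← hCdef]
      have hsp : (s ^ (-β)) ^ p = s ^ (-β - 2) := by
        rw [← Real.rpow_mul hs.le,
          show (-β * p : ℝ) = -β - 2 by rw [hβdef]; field_simp; ring_nf]
      rw [hCp, hsp]
    have hk2 : k ^ 2 = (p - 1) ^ 2 * ω / 4 := by
      rw [hkdef, div_pow, mul_pow, Real.sq_sqrt hω.le]; norm_num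
    have e4 : k ^ 2 * β ^ 2 = ω := by
      rw [hk2, hβdef]; field_simp; ring_nf
    have e5 : k ^ 2 * (β * (β + 1)) = (p + 1) * ω / 2 := by
      rw [hk2, hβdef]; field_simp; ring_nf
    have hch2 : ch ^ 2 = s ^ 2 + 1 := Real.cosh_sq (u x)
    rw [e3]
    linear_combination (C * β * (β + 1) * k ^ 2 * (s ^ (-β - 2))) * hch2 +
      (-(C * β * k ^ 2)) * e1 + (C * β * (β + 1) * k ^ 2) * e2 +
      (C * (s ^ (-β))) * e4 + (C * (s ^ (-β - 2))) * e5
  -- lower bound for sinh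
  have hsa : 0 < Real.sinh a := Real.sinh_pos_iff.mpr ha
  have hsinh_lb : ∀ x ∈ Ioi (0:ℝ), Real.sinh a * Real.exp (k * x) ≤ Real.sinh (u x) := by
    intro x hx
    have ht : 0 ≤ k * x := (mul_pos hkpos hx).le
    rw [hux x, Real.sinh_eq, Real.sinh_eq]
    have e1 : Real.exp (k * x + a) = Real.exp (k * x) * Real.exp a := Real.exp_add _ _
    have e2 : Real.exp (-(k * x + a)) ≤ Real.exp (k * x - a) :=
      Real.exp_le_exp.mpr (by linarith)
    have e3 : Real.exp (k * x) * Real.exp (-a) = Real.exp (k * x - a) := by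
      rw [← Real.exp_add]; ring_nf
    nlinarith [Real.exp_pos (k * x), Real.exp_pos a, Real.exp_pos (-a)]
  have hcontφ : ContinuousOn φ (Ioi 0) := fun x hx =>
    (hφ' x (hupos x hx)).continuousAt.continuousWithinAt
  have hcontψ : ContinuousOn ψ (Ioi 0) := fun x hx =>
    (hψ' x (hupos x hx)).differentiableAt.continuousAt.continuousWithinAt
  -- bound for φ
  have hφbd : ∀ x ∈ Ioi (0:ℝ),
      |φ x| ≤ (C * Real.sinh a ^ (-β)) * Real.exp (-Real.sqrt ω * x) := by
    intro x hx
    have hspos : 0 < Real.sinh (u x) := Real.sinh_pos_iff.mpr (hupos x hx)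
    have hb := hsinh_lb x hx
    have h1 : Real.sinh (u x) ^ (-β) ≤ (Real.sinh a * Real.exp (k * x)) ^ (-β) :=
      Real.rpow_le_rpow_of_nonpos (by positivity) hb (by linarith)
    have h2 : (Real.sinh a * Real.exp (k * x)) ^ (-β)
        = Real.sinh a ^ (-β) * Real.exp (-Real.sqrt ω * x) := by
      rw [Real.mul_rpow hsa.le (Real.exp_pos _).le, ← Real.exp_mul]
      congr 1
      rw [← hβk]; ring_nf
    rw [hφx x, abs_of_pos (by positivity : 0 < C * Real.sinh (u x) ^ (-β))]
    calc C * Real.sinh (u x) ^ (-β)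
        ≤ C * (Real.sinh a * Real.exp (k * x)) ^ (-β) :=
          mul_le_mul_of_nonneg_left h1 hCpos.le
      _ = (C * Real.sinh a ^ (-β)) * Real.exp (-Real.sqrt ω * x) := by rw [h2]; ring
  -- bound for ψ
  have hψbd : ∀ x ∈ Ioi (0:ℝ),
      |ψ x| ≤ (C * β * k * Real.sinh a ^ (-β - 1) * Real.exp a) *
        Real.exp (-Real.sqrt ω * x) := by
    intro x hx
    have huxp := hupos x hx
    have hspos : 0 < Real.sinh (u x) := Real.sinh_pos_iff.mpr huxp
    have hb := hsinh_lb x hx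
    have habs : |ψ x| = C * β * k * (Real.sinh (u x) ^ (-β - 1) * Real.cosh (u x)) := by
      have hpos : 0 ≤ Real.sinh (u x) ^ (-β - 1) * Real.cosh (u x) := by
        have := (Real.cosh_pos (u x)).le
        positivity
      have : ψ x = -(C * β * k * (Real.sinh (u x) ^ (-β - 1) * Real.cosh (u x))) := by
        simp only [hψdef]; ring
      rw [this, abs_neg, abs_of_nonneg (by positivity)]
    have h1 : Real.sinh (u x) ^ (-β - 1) ≤ (Real.sinh a * Real.exp (k * x)) ^ (-β - 1) :=
      Real.rpow_le_rpow_of_nonpos (by positivity) hb (by linarith)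
    have h2 : Real.cosh (u x) ≤ Real.exp (k * x) * Real.exp a := by
      rw [← Real.exp_add, ← hux x, Real.cosh_eq]
      have : Real.exp (-u x) ≤ Real.exp (u x) := Real.exp_le_exp.mpr (by linarith)
      linarith
    have h3 : (Real.sinh a * Real.exp (k * x)) ^ (-β - 1)
        = Real.sinh a ^ (-β - 1) * Real.exp ((k * x) * (-β - 1)) := by
      rw [Real.mul_rpow hsa.le (Real.exp_pos _).le, ← Real.exp_mul]
    have h4 : Real.exp ((k * x) * (-β - 1)) * (Real.exp (k * x) * Real.exp a)
        = Real.exp a * Real.exp (-Real.sqrt ω * x) := by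
      rw [← Real.exp_add, ← Real.exp_add, ← Real.exp_add]
      congr 1
      rw [← hβk]; ring
    rw [habs]
    have hmul : Real.sinh (u x) ^ (-β - 1) * Real.cosh (u x)
        ≤ (Real.sinh a * Real.exp (k * x)) ^ (-β - 1) * (Real.exp (k * x) * Real.exp a) :=
      mul_le_mul h1 h2 (Real.cosh_pos (u x)).le (by positivity)
    calc C * β * k * (Real.sinh (u x) ^ (-β - 1) * Real.cosh (u x))
        ≤ C * β * k * ((Real.sinh a * Real.exp (k * x)) ^ (-β - 1) *
            (Real.exp (k * x) * Real.exp a)) :=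
          mul_le_mul_of_nonneg_left hmul (by positivity)
      _ = (C * β * k * Real.sinh a ^ (-β - 1) * Real.exp a) *
            Real.exp (-Real.sqrt ω * x) := by
          rw [h3, mul_assoc (Real.sinh a ^ (-β - 1)), h4]; ring
  refine ⟨hODE, sq_int_of_exp_bound hsq hcontφ hφbd, ?_⟩
  have hψint : IntegrableOn (fun x => ψ x ^ 2) (Ioi 0) volume :=
    sq_int_of_exp_bound hsq hcontψ hψbd
  refine hψint.congr_fun (fun x hx => ?_) measurableSet_Ioi
  rw [(hφ' x (hupos x hx)).deriv]
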